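/- arXiv:1901.07425 — 2 statements merged into one kernel-verified Lean document; each statement's English description precedes it below -/
import Mathlib

section
/- Let p be a prime and G a finite p-group such that p^2 is not a codegree of any irreducible character of G. If χ is an irreducible character of G with cod(χ) > p, then χ is non-linear, i.e. χ(1) > 1. -/
open CategoryTheory

/-- The kernel of a finite-dimensional complex representation; for an irreducible
complex character of a finite group this coincides with the kernel of the character. -/
noncomputable def FDRep.repKer {G : Type} [Group G] (V : FDRep ℂ G) : Subgroup G :=
  MonoidHom.ker (Representation.asGroupHom V.ρ)

/-- The codegree of an irreducible character: `cod(χ) = |G : ker χ| / χ(1)`. -/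
noncomputable def FDRep.codegree {G : Type} [Group G] (V : FDRep ℂ G) : ℕ :=
  V.repKer.index / Module.finrank ℂ V

/-- `cod(G)`: the set of codegrees of the irreducible characters of `G`. -/
noncomputable def codegreeSet (G : Type) [Group G] : Set ℕ :=
  {n | ∃ V : FDRep ℂ G, Simple V ∧ V.codegree = n}

/-- `cd(G)`: the set of degrees of the irreducible characters of `G`. -/
noncomputable def degreeSet (G : Type) [Group G] : Set ℕ :=
  {d | ∃ V : FDRep ℂ G, Simple V ∧ Module.finrank ℂ V = d}

namespace CodegreeAux

open Module

variable {G : Type} [Group G]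

lemma mem_repKer_iff (V : FDRep ℂ G) (g : G) : g ∈ V.repKer ↔ V.ρ g = 1 := by
  rw [FDRep.repKer, MonoidHom.mem_ker, Units.ext_iff,
    Representation.asGroupHom_apply]
  rfl

/-- The one-dimensional representation associated to a homomorphism `G →* ℂˣ`. -/
noncomputable def unitsRep (ψ : G →* ℂˣ) : Representation ℂ G ℂ where
  toFun g := (ψ g : ℂ) • LinearMap.id
  map_one' := by ext x; simp
  map_mul' := fun g h => by ext x; simp [mul_smul, mul_comm]

lemma repKer_unitsRep (ψ : G →* ℂˣ) : (FDRep.of (unitsRep ψ)).repKer = ψ.ker := by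
  ext g
  rw [mem_repKer_iff, MonoidHom.mem_ker]
  have hρ : (FDRep.of (unitsRep ψ)).ρ g = unitsRep ψ g := rfl
  constructor
  · intro h
    have h3 : (ψ g : ℂ) = 1 := by
      have h2 := LinearMap.congr_fun (hρ ▸ h : unitsRep ψ g = 1) (1 : ℂ)
      simpa [unitsRep] using h2
    exact Units.ext (by simpa using h3)
  · intro h
    rw [hρ]
    ext x
    simp [unitsRep, h]

set_option maxHeartbeats 1000000 in
lemma fdRep_simple_of_finrank_eq_one (W : FDRep ℂ G) (hW : finrank ℂ W = 1) : Simple W := by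
  have hnt : Nontrivial W := by
    apply Module.nontrivial_of_finrank_pos (R := ℂ)
    omega
  constructor
  intro Y f hf
  constructor
  · intro hiso h0
    have h1 : (𝟙 W : W ⟶ W) = 0 := by
      have := congrArg (fun g => inv f ≫ g) h0
      simpa using this
    obtain ⟨w, hw⟩ := exists_ne (0 : W)
    apply hw
    have h2 := congrArg Action.Hom.hom h1
    rw [Action.id_hom, Action.zero_hom] at h2
    have h3 : (𝟙 W.V : W.V ⟶ W.V).hom.hom w = (0 : W.V ⟶ W.V).hom.hom w := by
      rw [h2]
    simpa using h3
  · intro hne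
    have hhom : f.hom.hom.hom ≠ 0 := by
      intro h
      exact hne (Action.Hom.ext (by ext x; exact LinearMap.congr_fun h x))
    set K : Submodule ℂ Y := LinearMap.ker f.hom.hom.hom with hK
    have hinv : ∀ g : G, ∀ x ∈ K, Y.ρ g x ∈ K := by
      intro g x hx
      have hc := f.comm g
      have hc' : f.hom.hom.hom ((Y.ρ g) x) = (W.ρ g) (f.hom.hom.hom x) := by
        have := congrArg (fun (u : Y.V ⟶ W.V) => u.hom.hom x) hc
        simpa using this
      simp only [hK, LinearMap.mem_ker] at hx ⊢
      refine hc'.trans ?_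
      rw [show f.hom.hom.hom x = 0 from hx]
      exact map_zero _
    let ρK : Representation ℂ G K :=
      { toFun := fun g => (Y.ρ g).restrict (hinv g)
        map_one' := by
          ext x
          simp [LinearMap.restrict_apply]
        map_mul' := fun g h => by
          ext x
          simp [LinearMap.restrict_apply] }
    let Z : FDRep ℂ G := FDRep.of ρK
    let ι : Z ⟶ Y :=
      { hom := ConcreteCategory.ofHom (K.subtype : (K : Type) →ₗ[ℂ] Y)
        comm := fun g => by
          ext x
          rfl }
    have hι : ι ≫ f = 0 := by
      apply Action.Hom.ext
      ext x
      exact x.2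
    have hι0 : ι = 0 := by
      rw [← cancel_mono f, hι, Limits.zero_comp]
    have hKbot : K = ⊥ := by
      rw [Submodule.eq_bot_iff]
      intro x hx
      have := congrArg (fun (u : Z ⟶ Y) => u.hom.hom.hom ⟨x, hx⟩) hι0
      exact this
    have hinj : Function.Injective f.hom.hom.hom := by
      rw [← LinearMap.ker_eq_bot]
      exact hKbot
    have hsurj : Function.Surjective f.hom.hom.hom := by
      rw [← LinearMap.range_eq_top]
      by_contra h
      have hlt : LinearMap.range f.hom.hom.hom < ⊤ := lt_top_iff_ne_top.mpr h
      have hfin := Submodule.finrank_lt hlt.ne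
      have hW' : finrank ℂ W.V = 1 := hW
      rw [hW'] at hfin
      have h0 : finrank ℂ (LinearMap.range f.hom.hom.hom) = 0 := by omega
      rw [Submodule.finrank_eq_zero] at h0
      exact hhom (LinearMap.range_eq_bot.mp h0)
    let e : Y ≃ₗ[ℂ] W := LinearEquiv.ofBijective _ ⟨hinj, hsurj⟩
    have : IsIso f.hom := by
      refine ⟨ConcreteCategory.ofHom (e.symm : (W : Type) →ₗ[ℂ] Y), ?_, ?_⟩
      · ext x
        exact e.symm_apply_apply x
      · ext x
        exact e.apply_symm_apply x
    exact Action.isIso_of_hom_isIso f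

lemma exists_hom_of_finrank_eq_one (V : FDRep ℂ G) (h : finrank ℂ V = 1) :
    ∃ φ : G →* ℂˣ, φ.ker = V.repKer := by
  let b := Module.finBasisOfFinrankEq ℂ V h
  have hb : ∀ v : V, v = b.repr v 0 • b 0 := by
    intro v
    conv_lhs => rw [← b.sum_repr v]
    simp
  let φ0 : G →* ℂ :=
    { toFun := fun g => b.repr (V.ρ g (b 0)) 0
      map_one' := by simp
      map_mul' := fun g h => by
        have h1 : V.ρ (g * h) (b 0) = V.ρ g (V.ρ h (b 0)) := by
          rw [map_mul]; rfl
        have h2 : V.ρ h (b 0) = b.repr (V.ρ h (b 0)) 0 • b 0 := hb _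
        simp only [h1]
        conv_lhs => rw [h2]
        rw [map_smul, map_smul]
        simp [mul_comm] }
  refine ⟨φ0.toHomUnits, ?_⟩
  ext g
  rw [MonoidHom.mem_ker, mem_repKer_iff, Units.ext_iff, MonoidHom.coe_toHomUnits,
    Units.val_one]
  have hφ0 : φ0 g = b.repr (V.ρ g (b 0)) 0 := rfl
  constructor
  · intro hg
    have h3 : V.ρ g (b 0) = b 0 := by
      conv_lhs => rw [hb (V.ρ g (b 0))]
      rw [← hφ0, hg, one_smul]
    apply b.ext
    intro i
    have : i = 0 := Subsingleton.elim i 0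
    subst this
    simpa using h3
  · intro hg
    rw [hφ0, hg]
    simp

end CodegreeAux

theorem pGroup_no_psq_codegree_large_codegree_nonlinear
    (p : ℕ) (hp : p.Prime)
    (G : Type) [Group G] [Finite G] (hG : IsPGroup p G)
    (h2 : p ^ 2 ∉ codegreeSet G)
    (V : FDRep ℂ G) (hV : Simple V) (hcodV : p < V.codegree) :
    1 < Module.finrank ℂ V := by
  by_contra hle
  push_neg at hle
  have hfr0 : Module.finrank ℂ V ≠ 0 := by
    intro h0
    have hss : Subsingleton V := by
      rw [← Module.finrank_zero_iff (R := ℂ)]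
      exact h0
    haveI hss' : Subsingleton ((forget (FGModuleCat ℂ)).obj V.V) := hss
    have hid : (𝟙 V : V ⟶ V) = 0 := by
      apply Action.Hom.ext
      ext x
      exact Subsingleton.elim _ _
    exact CategoryTheory.id_nonzero V hid
  have hfr : Module.finrank ℂ V = 1 := by omega
  obtain ⟨φ, hφ⟩ := CodegreeAux.exists_hom_of_finrank_eq_one V hfr
  have hcod : V.codegree = V.repKer.index := by
    rw [FDRep.codegree, hfr, Nat.div_one]
  haveI : Fact p.Prime := ⟨hp⟩
  haveI : V.repKer.FiniteIndex := ⟨Subgroup.index_ne_zero_of_finite⟩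
  obtain ⟨k, hk⟩ := hG.index V.repKer
  have hpk : p < p ^ k := by rw [← hk, ← hcod]; exact hcodV
  have hk2 : 2 ≤ k := by
    by_contra hlt
    push_neg at hlt
    interval_cases k
    · rw [pow_zero] at hpk
      have := hp.two_le
      omega
    · rw [pow_one] at hpk
      exact lt_irrefl _ hpk
  have hidx : V.repKer.index = Nat.card φ.range := by
    rw [← hφ, Subgroup.index_ker]
  haveI : Finite φ.range := Set.Finite.to_subtype (Set.finite_range φ)
  haveI := subgroup_units_cyclic φ.range
  obtain ⟨ζ, hζ⟩ := IsCyclic.exists_generator (α := φ.range)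
  have hrange : φ.range = Subgroup.zpowers (ζ : ℂˣ) := by
    ext x
    constructor
    · intro hx
      obtain ⟨n, hn⟩ := hζ ⟨x, hx⟩
      exact ⟨n, congrArg Subtype.val hn⟩
    · rintro ⟨n, rfl⟩
      exact Subgroup.zpow_mem _ ζ.2 n
  have hord : orderOf (ζ : ℂˣ) = p ^ k := by
    rw [Subgroup.orderOf_coe, orderOf_eq_card_of_forall_mem_zpowers hζ, ← hidx, ← hk]
  let ψ : G →* ℂˣ := (powMonoidHom (p ^ (k - 2))).comp φ
  have hψrange : ψ.range = Subgroup.zpowers ((ζ : ℂˣ) ^ (p ^ (k - 2))) := by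
    rw [MonoidHom.range_comp,
      congrArg (Subgroup.map (powMonoidHom (p ^ (k - 2)))) hrange,
      MonoidHom.map_zpowers, powMonoidHom_apply]
  have hcard2 : Nat.card ψ.range = p ^ 2 := by
    rw [hψrange, Nat.card_zpowers, orderOf_pow' _ (pow_pos hp.pos _).ne', hord,
      Nat.gcd_eq_right (pow_dvd_pow p (by omega)), Nat.pow_div (by omega) hp.pos]
    congr 1
    omega
  apply h2
  refine ⟨FDRep.of (CodegreeAux.unitsRep ψ),
    CodegreeAux.fdRep_simple_of_finrank_eq_one _ ?_, ?_⟩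
  · show Module.finrank ℂ ℂ = 1
    exact Module.finrank_self ℂ
  · rw [FDRep.codegree, CodegreeAux.repKer_unitsRep]
    have h1 : Module.finrank ℂ (FDRep.of (CodegreeAux.unitsRep ψ)) = 1 :=
      Module.finrank_self ℂ
    rw [h1, Nat.div_one, Subgroup.index_ker, hcard2]
end

section
/- Let p be a prime and G a nonabelian finite p-group such that the commutator subgroup G' has index p^2 in G. Then the third term G_3 of the lower central series has index p^3 in G, and the fourth term G_4 of the lower central series has index at most p^5 in G. -/
open CategoryTheory
open scoped commutatorElement

section AuxCommutator

variable {H : Type*} [Group H]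

lemma aux_comm_self (a : H) : ⁅a, a⁆ = 1 := by
  simp [commutatorElement_def]

lemma aux_comm_mul_left (a b t : H) (hb : ⁅b, t⁆ ∈ Subgroup.center H) :
    ⁅a * b, t⁆ = ⁅b, t⁆ * ⁅a, t⁆ := by
  have h := Subgroup.mem_center_iff.mp hb a
  calc ⁅a * b, t⁆ = a * ⁅b, t⁆ * a⁻¹ * ⁅a, t⁆ := by
        simp only [commutatorElement_def]; group
    _ = ⁅b, t⁆ * ⁅a, t⁆ := by rw [h, mul_inv_cancel_right]

lemma aux_comm_mul_right (a t s : H) (hs : ⁅a, s⁆ ∈ Subgroup.center H) :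
    ⁅a, t * s⁆ = ⁅a, t⁆ * ⁅a, s⁆ := by
  have h := Subgroup.mem_center_iff.mp hs t
  calc ⁅a, t * s⁆ = ⁅a, t⁆ * (t * ⁅a, s⁆ * t⁻¹) := by
        simp only [commutatorElement_def]; group
    _ = ⁅a, t⁆ * ⁅a, s⁆ := by rw [h, mul_inv_cancel_right]

lemma aux_comm_inv_left (a t : H) (h : ⁅a, t⁆ ∈ Subgroup.center H) :
    ⁅a⁻¹, t⁆ = ⁅a, t⁆⁻¹ := by
  have h1 := Subgroup.mem_center_iff.mp (Subgroup.inv_mem _ h) a⁻¹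
  calc ⁅a⁻¹, t⁆ = a⁻¹ * ⁅a, t⁆⁻¹ * a := by
        simp only [commutatorElement_def]; group
    _ = ⁅a, t⁆⁻¹ := by rw [h1, mul_assoc, inv_mul_cancel, mul_one]

lemma aux_comm_inv_right (a t : H) (h : ⁅a, t⁆ ∈ Subgroup.center H) :
    ⁅a, t⁻¹⁆ = ⁅a, t⁆⁻¹ := by
  have h1 := Subgroup.mem_center_iff.mp (Subgroup.inv_mem _ h) t⁻¹
  calc ⁅a, t⁻¹⁆ = t⁻¹ * ⁅a, t⁆⁻¹ * t := by
        simp only [commutatorElement_def]; group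
    _ = ⁅a, t⁆⁻¹ := by rw [h1, mul_assoc, inv_mul_cancel, mul_one]

lemma aux_comm_pow (a b : H) (h : ⁅a, b⁆ ∈ Subgroup.center H) (n : ℕ) :
    ⁅a ^ n, b⁆ = ⁅a, b⁆ ^ n := by
  induction n with
  | zero => simp [commutatorElement_def]
  | succ k ih =>
    rw [pow_succ, aux_comm_mul_left _ _ _ h, ih, ← pow_succ']

/-- The master lemma: in a group generated by `T`, `S` and a central subgroup `D`,
if all commutators of elements of `S` with generators lie in a central subgroup `K`,
then `⁅closure S ⊔ D, ⊤⁆ ≤ K`. -/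
lemma lemmaM (S T : Set H) (D : Subgroup H)
    (hD : D ≤ Subgroup.center H)
    (hScen : ∀ a ∈ S, ∀ t : H, ⁅a, t⁆ ∈ Subgroup.center H)
    (hgen : Subgroup.closure T ⊔ (Subgroup.closure S ⊔ D) = ⊤)
    (K : Subgroup H) (hK : K ≤ Subgroup.center H)
    (hST : ∀ a ∈ S, ∀ b ∈ T, ⁅a, b⁆ ∈ K)
    (hSS : ∀ a ∈ S, ∀ b ∈ S, ⁅a, b⁆ ∈ K) :
    ⁅Subgroup.closure S ⊔ D, (⊤ : Subgroup H)⁆ ≤ K := by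
  have hcomm1 : ∀ a ∈ S, ∀ t : H, ⁅a, t⁆ ∈ K := by
    intro a ha
    let Ta : Subgroup H :=
    { carrier := {t : H | ⁅a, t⁆ ∈ K}
      one_mem' := by
        have : ⁅a, (1 : H)⁆ = 1 := by simp [commutatorElement_def]
        show ⁅a, (1 : H)⁆ ∈ K
        rw [this]; exact one_mem K
      mul_mem' := by
        intro t s ht hs
        show ⁅a, t * s⁆ ∈ K
        rw [aux_comm_mul_right a t s (hScen a ha s)]
        exact mul_mem ht hs
      inv_mem' := by
        intro t ht
        show ⁅a, t⁻¹⁆ ∈ K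
        rw [aux_comm_inv_right a t (hScen a ha t)]
        exact inv_mem ht }
    have htop : (⊤ : Subgroup H) ≤ Ta := by
      rw [← hgen]
      refine sup_le ((Subgroup.closure_le _).mpr ?_)
        (sup_le ((Subgroup.closure_le _).mpr ?_) ?_)
      · intro b hb; exact hST a ha b hb
      · intro b hb; exact hSS a ha b hb
      · intro d hd
        have h1 : ⁅a, d⁆ = 1 :=
          commutatorElement_eq_one_iff_commute.mpr (Subgroup.mem_center_iff.mp (hD hd) a)
        show ⁅a, d⁆ ∈ K
        rw [h1]; exact one_mem K
    intro t
    exact htop (Subgroup.mem_top t)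
  let U : Subgroup H :=
  { carrier := {g : H | ∀ t : H, ⁅g, t⁆ ∈ K}
    one_mem' := by
      intro t
      have : ⁅(1 : H), t⁆ = 1 := by simp [commutatorElement_def]
      rw [this]; exact one_mem K
    mul_mem' := by
      intro g h hg hh t
      rw [aux_comm_mul_left g h t (hK (hh t))]
      exact mul_mem (hh t) (hg t)
    inv_mem' := by
      intro g hg t
      rw [aux_comm_inv_left g t (hK (hg t))]
      exact inv_mem (hg t) }
  have hle : Subgroup.closure S ⊔ D ≤ U := by
    refine sup_le ((Subgroup.closure_le _).mpr ?_) ?_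
    · intro a ha; exact hcomm1 a ha
    · intro d hd t
      have h1 : ⁅d, t⁆ = 1 :=
        commutatorElement_eq_one_iff_commute.mpr
          (Subgroup.mem_center_iff.mp (hD hd) t).symm
      rw [h1]; exact one_mem K
  rw [Subgroup.commutator_le]
  intro g hg t _
  exact hle hg t

end AuxCommutator

section AuxLCS

variable {G : Type} [Group G]

lemma map_lcs_le_center (n : ℕ) :
    Subgroup.map (QuotientGroup.mk' ((⊤ : Subgroup G).lowerCentralSeries (n + 1))) ((⊤ : Subgroup G).lowerCentralSeries n)
      ≤ Subgroup.center (G ⧸ (⊤ : Subgroup G).lowerCentralSeries (n + 1)) := by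
  rintro q ⟨g, hg, rfl⟩
  rw [Subgroup.mem_center_iff]
  intro z
  obtain ⟨s, rfl⟩ := QuotientGroup.mk'_surjective _ z
  have hmem : ⁅g, s⁆ ∈ (⊤ : Subgroup G).lowerCentralSeries (n + 1) := by
    rw [Subgroup.lowerCentralSeries_succ]
    exact Subgroup.commutator_mem_commutator hg (Subgroup.mem_top s)
  have h1 : (QuotientGroup.mk' ((⊤ : Subgroup G).lowerCentralSeries (n + 1))) ⁅g, s⁆ = 1 := by
    rw [← MonoidHom.mem_ker, QuotientGroup.ker_mk']
    exact hmem
  rw [map_commutatorElement] at h1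
  exact (commutatorElement_eq_one_iff_commute.mp h1).symm.eq

lemma part1core (x y : G)
    (hgen : Subgroup.closure {x, y} ⊔ (⊤ : Subgroup G).lowerCentralSeries 1 = ⊤) :
    Subgroup.map (QuotientGroup.mk' ((⊤ : Subgroup G).lowerCentralSeries 2)) ((⊤ : Subgroup G).lowerCentralSeries 1)
      = Subgroup.zpowers ((QuotientGroup.mk' ((⊤ : Subgroup G).lowerCentralSeries 2)) ⁅x, y⁆) := by
  set π := QuotientGroup.mk' ((⊤ : Subgroup G).lowerCentralSeries 2) with hπ
  have hsurj : Function.Surjective π := QuotientGroup.mk'_surjective _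
  have hW : Subgroup.map π ((⊤ : Subgroup G).lowerCentralSeries 1)
      = ⁅(⊤ : Subgroup (G ⧸ (⊤ : Subgroup G).lowerCentralSeries 2)), ⊤⁆ := by
    rw [Subgroup.top_lowerCentralSeries_one, commutator_def, Subgroup.map_commutator,
      Subgroup.map_top_of_surjective _ hsurj]
  have hcent : Subgroup.map π ((⊤ : Subgroup G).lowerCentralSeries 1) ≤ Subgroup.center _ :=
    map_lcs_le_center 1
  have hgenQ : Subgroup.closure {π x, π y} ⊔ Subgroup.map π ((⊤ : Subgroup G).lowerCentralSeries 1) = ⊤ := by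
    have h := congrArg (Subgroup.map π) hgen
    rwa [Subgroup.map_sup, MonoidHom.map_closure, Set.image_pair,
      Subgroup.map_top_of_surjective _ hsurj] at h
  have hxyK : π ⁅x, y⁆ = ⁅π x, π y⁆ := map_commutatorElement _ _ _
  have hKle : Subgroup.zpowers (π ⁅x, y⁆) ≤ Subgroup.map π ((⊤ : Subgroup G).lowerCentralSeries 1) := by
    rw [Subgroup.zpowers_le]
    refine Subgroup.mem_map_of_mem _ ?_
    rw [Subgroup.top_lowerCentralSeries_one, commutator_def]
    exact Subgroup.commutator_mem_commutator (Subgroup.mem_top x) (Subgroup.mem_top y)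
  have hmem : ∀ a ∈ ({π x, π y} : Set (G ⧸ (⊤ : Subgroup G).lowerCentralSeries 2)),
      ∀ b ∈ ({π x, π y} : Set (G ⧸ (⊤ : Subgroup G).lowerCentralSeries 2)),
      ⁅a, b⁆ ∈ Subgroup.zpowers (π ⁅x, y⁆) := by
    intro a haa b hbb
    simp only [Set.mem_insert_iff, Set.mem_singleton_iff] at haa hbb
    rcases haa with rfl | rfl <;> rcases hbb with rfl | rfl
    · rw [aux_comm_self]; exact one_mem _
    · rw [← hxyK]; exact Subgroup.mem_zpowers _
    · have hyx : ⁅π y, π x⁆ = (π ⁅x, y⁆)⁻¹ := by rw [hxyK, commutatorElement_inv]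
      rw [hyx]
      exact Subgroup.inv_mem _ (Subgroup.mem_zpowers _)
    · rw [aux_comm_self]; exact one_mem _
  have hScen : ∀ a ∈ ({π x, π y} : Set (G ⧸ (⊤ : Subgroup G).lowerCentralSeries 2)),
      ∀ t : G ⧸ (⊤ : Subgroup G).lowerCentralSeries 2, ⁅a, t⁆ ∈ Subgroup.center _ := by
    intro a _ t
    apply hcent
    rw [hW]
    exact Subgroup.commutator_mem_commutator (Subgroup.mem_top a) (Subgroup.mem_top t)
  have hmain := lemmaM ({π x, π y} : Set (G ⧸ (⊤ : Subgroup G).lowerCentralSeries 2)) {π x, π y}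
    (Subgroup.map π ((⊤ : Subgroup G).lowerCentralSeries 1)) hcent hScen
    (by rw [hgenQ, sup_top_eq]) (Subgroup.zpowers (π ⁅x, y⁆))
    (le_trans hKle hcent) hmem hmem
  refine le_antisymm ?_ hKle
  have h2 : Subgroup.map π ((⊤ : Subgroup G).lowerCentralSeries 1)
      = ⁅Subgroup.closure {π x, π y} ⊔ Subgroup.map π ((⊤ : Subgroup G).lowerCentralSeries 1),
          (⊤ : Subgroup (G ⧸ (⊤ : Subgroup G).lowerCentralSeries 2))⁆ := by
    rw [hgenQ, ← hW]
  exact le_trans (le_of_eq h2) hmain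

end AuxLCS

theorem pGroup_derived_index_psq_lower_central_indices
    (p : ℕ) (hp : p.Prime)
    (G : Type) [Group G] [Finite G] (hG : IsPGroup p G)
    (hnab : ¬ ∀ x y : G, x * y = y * x)
    (hder : (commutator G).index = p ^ 2) :
    ((⊤ : Subgroup G).lowerCentralSeries 2).index = p ^ 3 ∧ ((⊤ : Subgroup G).lowerCentralSeries 3).index ≤ p ^ 5 := by
  classical
  haveI : Fact p.Prime := ⟨hp⟩
  have hnilp : Group.IsNilpotent G := hG.isNilpotent
  have hbot : (⊤ : Subgroup G).lowerCentralSeries 1 ≠ ⊥ := by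
    intro h
    apply hnab
    intro a b
    have hmem : ⁅a, b⁆ ∈ (⊤ : Subgroup G).lowerCentralSeries 1 := by
      rw [Subgroup.top_lowerCentralSeries_one, commutator_def]
      exact Subgroup.commutator_mem_commutator (Subgroup.mem_top a) (Subgroup.mem_top b)
    rw [h, Subgroup.mem_bot] at hmem
    exact commutatorElement_eq_one_iff_commute.mp hmem
  have hstab : ¬ (⊤ : Subgroup G).lowerCentralSeries 1 ≤ (⊤ : Subgroup G).lowerCentralSeries 2 := by
    intro hle
    have heq : (⊤ : Subgroup G).lowerCentralSeries 2 = (⊤ : Subgroup G).lowerCentralSeries 1 :=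
      le_antisymm (Subgroup.lowerCentralSeries_antitone _ (by norm_num)) hle
    have hall : ∀ n, (⊤ : Subgroup G).lowerCentralSeries (n + 1) = (⊤ : Subgroup G).lowerCentralSeries 1 := by
      intro n
      induction n with
      | zero => rfl
      | succ k ih =>
        rw [Subgroup.lowerCentralSeries_succ, ih, ← Subgroup.lowerCentralSeries_succ]
        exact heq
    obtain ⟨n, hn⟩ := Subgroup.nilpotent_iff_lowerCentralSeries.mp hnilp
    cases n with
    | zero =>
      exact hbot (le_bot_iff.mp (hn ▸ Subgroup.lowerCentralSeries_antitone _ (Nat.zero_le 1)))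
    | succ k => exact hbot ((hall k).symm.trans hn)
  have hcard1 : ((⊤ : Subgroup G).lowerCentralSeries 1).index = p ^ 2 := by
    rw [Subgroup.top_lowerCentralSeries_one]; exact hder
  -- a helper to descend membership in bottom subgroup of the quotient by lcs 2
  have hbotpull : Subgroup.map (QuotientGroup.mk' ((⊤ : Subgroup G).lowerCentralSeries 2))
      ((⊤ : Subgroup G).lowerCentralSeries 1) = ⊥ → False := by
    intro hmapbot
    apply hstab
    intro g hg
    have h1 : (QuotientGroup.mk' ((⊤ : Subgroup G).lowerCentralSeries 2)) g ∈
        (⊥ : Subgroup (G ⧸ (⊤ : Subgroup G).lowerCentralSeries 2)) :=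
      hmapbot ▸ Subgroup.mem_map_of_mem _ hg
    rw [Subgroup.mem_bot, ← MonoidHom.mem_ker, QuotientGroup.ker_mk'] at h1
    exact h1
  -- obtain good generators
  have key : ∃ x y : G, Subgroup.closure {x, y} ⊔ (⊤ : Subgroup G).lowerCentralSeries 1 = ⊤ ∧
      x ^ p ∈ (⊤ : Subgroup G).lowerCentralSeries 1 ∧ y ^ p ∈ (⊤ : Subgroup G).lowerCentralSeries 1 := by
    have hcardA : Nat.card (G ⧸ (⊤ : Subgroup G).lowerCentralSeries 1) = p ^ 2 := hcard1
    -- generic lifting of generation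
    have hlift : ∀ a b : G ⧸ (⊤ : Subgroup G).lowerCentralSeries 1,
        Subgroup.zpowers a ⊔ Subgroup.zpowers b = ⊤ →
        ∀ x y : G, (QuotientGroup.mk' ((⊤ : Subgroup G).lowerCentralSeries 1)) x = a →
          (QuotientGroup.mk' ((⊤ : Subgroup G).lowerCentralSeries 1)) y = b →
          Subgroup.closure {x, y} ⊔ (⊤ : Subgroup G).lowerCentralSeries 1 = ⊤ := by
      intro a b hab x y hx hy
      set π0 := QuotientGroup.mk' ((⊤ : Subgroup G).lowerCentralSeries 1) with hπ0
      have hmap : Subgroup.map π0 (Subgroup.closure {x, y} ⊔ (⊤ : Subgroup G).lowerCentralSeries 1) = ⊤ := by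
        rw [Subgroup.map_sup, MonoidHom.map_closure, Set.image_pair, hx, hy]
        have hcl : Subgroup.closure {a, b} = ⊤ := by
          rw [Set.insert_eq, Subgroup.closure_union, ← Subgroup.zpowers_eq_closure,
            ← Subgroup.zpowers_eq_closure]
          exact hab
        rw [hcl, top_sup_eq]
      have h := congrArg (Subgroup.comap π0) hmap
      rwa [Subgroup.comap_map_eq, QuotientGroup.ker_mk', Subgroup.comap_top,
        sup_assoc, sup_idem] at h
    by_cases hcase : ∀ a : G ⧸ (⊤ : Subgroup G).lowerCentralSeries 1, a ^ p = 1
    · -- elementary abelian case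
      have hnontriv : Nontrivial (G ⧸ (⊤ : Subgroup G).lowerCentralSeries 1) := by
        rw [← Finite.one_lt_card_iff_nontrivial, hcardA]
        exact Nat.one_lt_pow (by norm_num) hp.one_lt
      obtain ⟨a, ha⟩ := exists_ne (1 : G ⧸ (⊤ : Subgroup G).lowerCentralSeries 1)
      have horda : orderOf a = p := by
        rcases (Nat.dvd_prime hp).mp (orderOf_dvd_of_pow_eq_one (hcase a)) with h | h
        · exact absurd (orderOf_eq_one_iff.mp h) ha
        · exact h
      obtain ⟨b, hb⟩ : ∃ b : G ⧸ (⊤ : Subgroup G).lowerCentralSeries 1, b ∉ Subgroup.zpowers a := by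
        by_contra hcon
        push_neg at hcon
        have htop : Subgroup.zpowers a = ⊤ := by
          rw [Subgroup.eq_top_iff']; exact hcon
        have hcc : Nat.card (Subgroup.zpowers a) = p ^ 2 := by
          rw [htop, Subgroup.card_top, hcardA]
        rw [Nat.card_zpowers, horda] at hcc
        have : p < p ^ 2 := by
          calc p = p ^ 1 := (pow_one p).symm
          _ < p ^ 2 := Nat.pow_lt_pow_right hp.one_lt (by norm_num)
        omega
      have hC : Subgroup.zpowers a ⊔ Subgroup.zpowers b = ⊤ := by
        have h1 : Nat.card (Subgroup.zpowers a ⊔ Subgroup.zpowers b : Subgroup _) ∣ p ^ 2 :=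
          hcardA ▸ Subgroup.card_subgroup_dvd_card _
        obtain ⟨i, hile, hi⟩ := (Nat.dvd_prime_pow hp).mp h1
        have hdvd : p ∣ Nat.card (Subgroup.zpowers a ⊔ Subgroup.zpowers b : Subgroup _) := by
          have := Subgroup.card_dvd_of_le
            (le_sup_left : Subgroup.zpowers a ≤ Subgroup.zpowers a ⊔ Subgroup.zpowers b)
          rwa [Nat.card_zpowers, horda] at this
        interval_cases i
        · rw [pow_zero] at hi
          rw [hi, Nat.dvd_one] at hdvd
          exact absurd hdvd hp.ne_one
        · exfalso
          rw [pow_one] at hi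
          have heq2 : Subgroup.zpowers a = Subgroup.zpowers a ⊔ Subgroup.zpowers b :=
            Subgroup.eq_of_le_of_card_ge le_sup_left
              (by rw [hi, Nat.card_zpowers, horda])
          exact hb (heq2 ▸ (Subgroup.mem_sup_right (Subgroup.mem_zpowers b)))
        · apply Subgroup.eq_top_of_card_eq
          rw [hi, hcardA]
      obtain ⟨x, hx⟩ := QuotientGroup.mk'_surjective ((⊤ : Subgroup G).lowerCentralSeries 1) a
      obtain ⟨y, hy⟩ := QuotientGroup.mk'_surjective ((⊤ : Subgroup G).lowerCentralSeries 1) b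
      refine ⟨x, y, hlift a b hC x y hx hy, ?_, ?_⟩
      · have h1 : (QuotientGroup.mk' ((⊤ : Subgroup G).lowerCentralSeries 1)) (x ^ p) = 1 := by
          rw [map_pow, hx]; exact hcase a
        rwa [← MonoidHom.mem_ker, QuotientGroup.ker_mk'] at h1
      · have h1 : (QuotientGroup.mk' ((⊤ : Subgroup G).lowerCentralSeries 1)) (y ^ p) = 1 := by
          rw [map_pow, hy]; exact hcase b
        rwa [← MonoidHom.mem_ker, QuotientGroup.ker_mk'] at h1
    · -- cyclic case: contradiction
      exfalso
      push_neg at hcase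
      obtain ⟨a, ha⟩ := hcase
      have horder : orderOf a = p ^ 2 := by
        have h1 : orderOf a ∣ p ^ 2 := hcardA ▸ orderOf_dvd_natCard a
        obtain ⟨i, hile, hi⟩ := (Nat.dvd_prime_pow hp).mp h1
        interval_cases i
        · rw [pow_zero] at hi
          exact absurd (by rw [orderOf_eq_one_iff.mp hi, one_pow]) ha
        · rw [pow_one] at hi
          exact absurd (hi ▸ pow_orderOf_eq_one a) ha
        · exact hi
      have htopA : Subgroup.zpowers a = ⊤ :=
        Subgroup.eq_top_of_card_eq _ (by rw [Nat.card_zpowers, horder, hcardA])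
      obtain ⟨x, hx⟩ := QuotientGroup.mk'_surjective ((⊤ : Subgroup G).lowerCentralSeries 1) a
      have hgenx : Subgroup.closure {x, x} ⊔ (⊤ : Subgroup G).lowerCentralSeries 1 = ⊤ :=
        hlift a a (by rw [htopA, top_sup_eq]) x x hx hx
      have hcore := part1core x x hgenx
      rw [aux_comm_self, map_one, Subgroup.zpowers_one_eq_bot] at hcore
      exact hbotpull hcore
  obtain ⟨x, y, hgenxy, hxp, hyp⟩ := key
  set π := QuotientGroup.mk' ((⊤ : Subgroup G).lowerCentralSeries 2) with hπ
  have hcore := part1core x y hgenxy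
  have hcmem : ⁅x, y⁆ ∈ (⊤ : Subgroup G).lowerCentralSeries 1 := by
    rw [Subgroup.top_lowerCentralSeries_one, commutator_def]
    exact Subgroup.commutator_mem_commutator (Subgroup.mem_top x) (Subgroup.mem_top y)
  have hcent : Subgroup.map π ((⊤ : Subgroup G).lowerCentralSeries 1) ≤ Subgroup.center _ :=
    map_lcs_le_center 1
  have hccentral : π ⁅x, y⁆ ∈ Subgroup.center _ :=
    hcent (Subgroup.mem_map_of_mem _ hcmem)
  have hcppow : (π ⁅x, y⁆) ^ p = 1 := by
    have h1 : π ⁅x, y⁆ = ⁅π x, π y⁆ := map_commutatorElement _ _ _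
    have h2 : ⁅π x, π y⁆ ∈ Subgroup.center _ := h1 ▸ hccentral
    rw [h1, ← aux_comm_pow _ _ h2 p]
    have h3 : (π x) ^ p ∈ Subgroup.center _ := by
      rw [← map_pow]
      exact hcent (Subgroup.mem_map_of_mem _ hxp)
    exact commutatorElement_eq_one_iff_commute.mpr
      (Subgroup.mem_center_iff.mp h3 (π y)).symm
  have hcne : π ⁅x, y⁆ ≠ 1 := by
    intro h1
    rw [h1, Subgroup.zpowers_one_eq_bot] at hcore
    exact hbotpull hcore
  have hordc : orderOf (π ⁅x, y⁆) = p := by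
    rcases (Nat.dvd_prime hp).mp (orderOf_dvd_of_pow_eq_one hcppow) with h | h
    · exact absurd (orderOf_eq_one_iff.mp h) hcne
    · exact h
  have hidx2 : ((⊤ : Subgroup G).lowerCentralSeries 2).index = p ^ 3 := by
    have hWindex : (Subgroup.map π ((⊤ : Subgroup G).lowerCentralSeries 1)).index = p ^ 2 := by
      rw [← Subgroup.index_comap_of_surjective _ (QuotientGroup.mk'_surjective _),
        Subgroup.comap_map_eq, QuotientGroup.ker_mk',
        sup_of_le_left (Subgroup.lowerCentralSeries_antitone _ (by norm_num : (1:ℕ) ≤ 2)), hcard1]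
    have hWcard : Nat.card (Subgroup.map π ((⊤ : Subgroup G).lowerCentralSeries 1)) = p := by
      rw [hcore, Nat.card_zpowers, hordc]
    have h := Subgroup.card_mul_index (Subgroup.map π ((⊤ : Subgroup G).lowerCentralSeries 1))
    rw [hWcard, hWindex] at h
    show Nat.card (G ⧸ (⊤ : Subgroup G).lowerCentralSeries 2) = p ^ 3
    rw [← h]; ring
  refine ⟨hidx2, ?_⟩
  -- Part 2
  have hcp3 : ⁅x, y⁆ ^ p ∈ (⊤ : Subgroup G).lowerCentralSeries 2 := by
    have h1 : π (⁅x, y⁆ ^ p) = 1 := by rw [map_pow]; exact hcppow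
    rwa [← MonoidHom.mem_ker, QuotientGroup.ker_mk'] at h1
  have hγ1eq : Subgroup.zpowers ⁅x, y⁆ ⊔ (⊤ : Subgroup G).lowerCentralSeries 2 = (⊤ : Subgroup G).lowerCentralSeries 1 := by
    have h1 : Subgroup.map π (Subgroup.zpowers ⁅x, y⁆)
        = Subgroup.map π ((⊤ : Subgroup G).lowerCentralSeries 1) := by
      rw [hcore, MonoidHom.map_zpowers]
    have h := congrArg (Subgroup.comap π) h1
    rwa [Subgroup.comap_map_eq, Subgroup.comap_map_eq, QuotientGroup.ker_mk',
      sup_of_le_left (Subgroup.lowerCentralSeries_antitone _ (by norm_num : (1:ℕ) ≤ 2))] at h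
  set ρ := QuotientGroup.mk' ((⊤ : Subgroup G).lowerCentralSeries 3) with hρ
  have hsurjρ : Function.Surjective ρ := QuotientGroup.mk'_surjective _
  have hcent3 : Subgroup.map ρ ((⊤ : Subgroup G).lowerCentralSeries 2) ≤ Subgroup.center _ :=
    map_lcs_le_center 2
  have hcx : ⁅⁅x, y⁆, x⁆ ∈ (⊤ : Subgroup G).lowerCentralSeries 2 := by
    rw [Subgroup.lowerCentralSeries_succ]
    exact Subgroup.commutator_mem_commutator hcmem (Subgroup.mem_top x)
  have hcy : ⁅⁅x, y⁆, y⁆ ∈ (⊤ : Subgroup G).lowerCentralSeries 2 := by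
    rw [Subgroup.lowerCentralSeries_succ]
    exact Subgroup.commutator_mem_commutator hcmem (Subgroup.mem_top y)
  have huC3 : ⁅ρ ⁅x, y⁆, ρ x⁆ ∈ Subgroup.map ρ ((⊤ : Subgroup G).lowerCentralSeries 2) := by
    rw [← map_commutatorElement]
    exact Subgroup.mem_map_of_mem _ hcx
  have hvC3 : ⁅ρ ⁅x, y⁆, ρ y⁆ ∈ Subgroup.map ρ ((⊤ : Subgroup G).lowerCentralSeries 2) := by
    rw [← map_commutatorElement]
    exact Subgroup.mem_map_of_mem _ hcy
  have hKle : Subgroup.zpowers ⁅ρ ⁅x, y⁆, ρ x⁆ ⊔ Subgroup.zpowers ⁅ρ ⁅x, y⁆, ρ y⁆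
      ≤ Subgroup.map ρ ((⊤ : Subgroup G).lowerCentralSeries 2) :=
    sup_le (Subgroup.zpowers_le.mpr huC3) (Subgroup.zpowers_le.mpr hvC3)
  have hmapγ1 : Subgroup.map ρ ((⊤ : Subgroup G).lowerCentralSeries 1)
      = Subgroup.zpowers (ρ ⁅x, y⁆) ⊔ Subgroup.map ρ ((⊤ : Subgroup G).lowerCentralSeries 2) := by
    rw [← hγ1eq, Subgroup.map_sup, MonoidHom.map_zpowers]
  have hgenQ2 : Subgroup.closure {ρ x, ρ y} ⊔
      (Subgroup.closure {ρ ⁅x, y⁆} ⊔ Subgroup.map ρ ((⊤ : Subgroup G).lowerCentralSeries 2)) = ⊤ := by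
    have h := congrArg (Subgroup.map ρ) hgenxy
    rw [Subgroup.map_sup, MonoidHom.map_closure, Set.image_pair,
      Subgroup.map_top_of_surjective _ hsurjρ, hmapγ1] at h
    rwa [← Subgroup.zpowers_eq_closure]
  have hScen2 : ∀ a ∈ ({ρ ⁅x, y⁆} : Set (G ⧸ (⊤ : Subgroup G).lowerCentralSeries 3)),
      ∀ t : G ⧸ (⊤ : Subgroup G).lowerCentralSeries 3, ⁅a, t⁆ ∈ Subgroup.center _ := by
    intro a haa t
    rw [Set.mem_singleton_iff] at haa
    subst haa
    obtain ⟨s, rfl⟩ := hsurjρ t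
    apply hcent3
    rw [← map_commutatorElement]
    refine Subgroup.mem_map_of_mem _ ?_
    rw [Subgroup.lowerCentralSeries_succ]
    exact Subgroup.commutator_mem_commutator hcmem (Subgroup.mem_top s)
  have hST2 : ∀ a ∈ ({ρ ⁅x, y⁆} : Set (G ⧸ (⊤ : Subgroup G).lowerCentralSeries 3)),
      ∀ b ∈ ({ρ x, ρ y} : Set (G ⧸ (⊤ : Subgroup G).lowerCentralSeries 3)),
      ⁅a, b⁆ ∈ Subgroup.zpowers ⁅ρ ⁅x, y⁆, ρ x⁆ ⊔ Subgroup.zpowers ⁅ρ ⁅x, y⁆, ρ y⁆ := by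
    intro a haa b hbb
    rw [Set.mem_singleton_iff] at haa
    subst haa
    simp only [Set.mem_insert_iff, Set.mem_singleton_iff] at hbb
    rcases hbb with rfl | rfl
    · exact Subgroup.mem_sup_left (Subgroup.mem_zpowers _)
    · exact Subgroup.mem_sup_right (Subgroup.mem_zpowers _)
  have hSS2 : ∀ a ∈ ({ρ ⁅x, y⁆} : Set (G ⧸ (⊤ : Subgroup G).lowerCentralSeries 3)),
      ∀ b ∈ ({ρ ⁅x, y⁆} : Set (G ⧸ (⊤ : Subgroup G).lowerCentralSeries 3)),
      ⁅a, b⁆ ∈ Subgroup.zpowers ⁅ρ ⁅x, y⁆, ρ x⁆ ⊔ Subgroup.zpowers ⁅ρ ⁅x, y⁆, ρ y⁆ := by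
    intro a haa b hbb
    rw [Set.mem_singleton_iff] at haa hbb
    subst haa; subst hbb
    rw [aux_comm_self]; exact one_mem _
  have hmain2 := lemmaM ({ρ ⁅x, y⁆} : Set (G ⧸ (⊤ : Subgroup G).lowerCentralSeries 3)) {ρ x, ρ y}
    (Subgroup.map ρ ((⊤ : Subgroup G).lowerCentralSeries 2)) hcent3 hScen2 hgenQ2
    (Subgroup.zpowers ⁅ρ ⁅x, y⁆, ρ x⁆ ⊔ Subgroup.zpowers ⁅ρ ⁅x, y⁆, ρ y⁆)
    (le_trans hKle hcent3) hST2 hSS2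
  have hC3eq : Subgroup.map ρ ((⊤ : Subgroup G).lowerCentralSeries 2)
      = ⁅Subgroup.closure {ρ ⁅x, y⁆} ⊔ Subgroup.map ρ ((⊤ : Subgroup G).lowerCentralSeries 2),
          (⊤ : Subgroup (G ⧸ (⊤ : Subgroup G).lowerCentralSeries 3))⁆ := by
    calc Subgroup.map ρ ((⊤ : Subgroup G).lowerCentralSeries 2)
        = Subgroup.map ρ ⁅(⊤ : Subgroup G).lowerCentralSeries 1, ⊤⁆ :=
          congrArg (Subgroup.map ρ) (Subgroup.lowerCentralSeries_succ ⊤ 1)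
      _ = ⁅Subgroup.map ρ ((⊤ : Subgroup G).lowerCentralSeries 1),
            (⊤ : Subgroup (G ⧸ (⊤ : Subgroup G).lowerCentralSeries 3))⁆ := by
          rw [Subgroup.map_commutator, Subgroup.map_top_of_surjective _ hsurjρ]
      _ = ⁅Subgroup.closure {ρ ⁅x, y⁆} ⊔ Subgroup.map ρ ((⊤ : Subgroup G).lowerCentralSeries 2),
            (⊤ : Subgroup (G ⧸ (⊤ : Subgroup G).lowerCentralSeries 3))⁆ := by
          rw [hmapγ1, ← Subgroup.zpowers_eq_closure]
  have hC3le : Subgroup.map ρ ((⊤ : Subgroup G).lowerCentralSeries 2)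
      ≤ Subgroup.zpowers ⁅ρ ⁅x, y⁆, ρ x⁆ ⊔ Subgroup.zpowers ⁅ρ ⁅x, y⁆, ρ y⁆ :=
    le_trans (le_of_eq hC3eq) hmain2
  -- p-th powers vanish
  have hup : ⁅ρ ⁅x, y⁆, ρ x⁆ ^ p = 1 := by
    have hucen : ⁅ρ ⁅x, y⁆, ρ x⁆ ∈ Subgroup.center _ := hcent3 huC3
    rw [← aux_comm_pow _ _ hucen p]
    have h3 : (ρ ⁅x, y⁆) ^ p ∈ Subgroup.center _ := by
      rw [← map_pow]
      exact hcent3 (Subgroup.mem_map_of_mem _ hcp3)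
    exact commutatorElement_eq_one_iff_commute.mpr
      (Subgroup.mem_center_iff.mp h3 (ρ x)).symm
  have hvp : ⁅ρ ⁅x, y⁆, ρ y⁆ ^ p = 1 := by
    have hucen : ⁅ρ ⁅x, y⁆, ρ y⁆ ∈ Subgroup.center _ := hcent3 hvC3
    rw [← aux_comm_pow _ _ hucen p]
    have h3 : (ρ ⁅x, y⁆) ^ p ∈ Subgroup.center _ := by
      rw [← map_pow]
      exact hcent3 (Subgroup.mem_map_of_mem _ hcp3)
    exact commutatorElement_eq_one_iff_commute.mpr
      (Subgroup.mem_center_iff.mp h3 (ρ y)).symm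
  -- cardinality bound
  have hcardu : Nat.card (Subgroup.zpowers ⁅ρ ⁅x, y⁆, ρ x⁆) ≤ p := by
    rw [Nat.card_zpowers]
    exact Nat.le_of_dvd hp.pos (orderOf_dvd_of_pow_eq_one hup)
  have hcardv : Nat.card (Subgroup.zpowers ⁅ρ ⁅x, y⁆, ρ y⁆) ≤ p := by
    rw [Nat.card_zpowers]
    exact Nat.le_of_dvd hp.pos (orderOf_dvd_of_pow_eq_one hvp)
  haveI hnormu : (Subgroup.zpowers ⁅ρ ⁅x, y⁆, ρ x⁆).Normal := by
    constructor
    intro n hn g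
    have hnc : n ∈ Subgroup.center _ := (Subgroup.zpowers_le.mpr (hcent3 huC3)) hn
    have := Subgroup.mem_center_iff.mp hnc g
    rw [this, mul_inv_cancel_right]
    exact hn
  have hcardC3 : Nat.card (Subgroup.map ρ ((⊤ : Subgroup G).lowerCentralSeries 2)) ≤ p * p := by
    set Ku := Subgroup.zpowers ⁅ρ ⁅x, y⁆, ρ x⁆ with hKu
    set Kv := Subgroup.zpowers ⁅ρ ⁅x, y⁆, ρ y⁆ with hKv
    have hf : ∀ w : Ku × Kv, (w.1.1 * w.2.1 : G ⧸ (⊤ : Subgroup G).lowerCentralSeries 3)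
        ∈ Subgroup.map ρ ((⊤ : Subgroup G).lowerCentralSeries 2) :=
      fun w => mul_mem (hKle (Subgroup.mem_sup_left w.1.2)) (hKle (Subgroup.mem_sup_right w.2.2))
    have hsurjf : Function.Surjective
        (fun w : Ku × Kv => (⟨w.1.1 * w.2.1, hf w⟩ : Subgroup.map ρ ((⊤ : Subgroup G).lowerCentralSeries 2))) := by
      rintro ⟨w, hw⟩
      have hw2 : w ∈ (↑(Ku ⊔ Kv) : Set (G ⧸ (⊤ : Subgroup G).lowerCentralSeries 3)) := hC3le hw
      rw [Subgroup.normal_mul] at hw2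
      obtain ⟨n, hn, h, hh, hnh⟩ := hw2
      exact ⟨(⟨n, hn⟩, ⟨h, hh⟩), Subtype.ext hnh⟩
    calc Nat.card (Subgroup.map ρ ((⊤ : Subgroup G).lowerCentralSeries 2))
        ≤ Nat.card (Ku × Kv) := Nat.card_le_card_of_surjective _ hsurjf
      _ = Nat.card Ku * Nat.card Kv := Nat.card_prod _ _
      _ ≤ p * p := Nat.mul_le_mul hcardu hcardv
  -- final index computation
  have hC3index : (Subgroup.map ρ ((⊤ : Subgroup G).lowerCentralSeries 2)).index = p ^ 3 := by
    rw [← Subgroup.index_comap_of_surjective _ hsurjρ,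
      Subgroup.comap_map_eq, QuotientGroup.ker_mk',
      sup_of_le_left (Subgroup.lowerCentralSeries_antitone _ (by norm_num : (2:ℕ) ≤ 3)), hidx2]
  have h := Subgroup.card_mul_index (Subgroup.map ρ ((⊤ : Subgroup G).lowerCentralSeries 2))
  rw [hC3index] at h
  show Nat.card (G ⧸ (⊤ : Subgroup G).lowerCentralSeries 3) ≤ p ^ 5
  calc Nat.card (G ⧸ (⊤ : Subgroup G).lowerCentralSeries 3)
      = Nat.card (Subgroup.map ρ ((⊤ : Subgroup G).lowerCentralSeries 2)) * p ^ 3 := h.symm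
    _ ≤ (p * p) * p ^ 3 := Nat.mul_le_mul_right _ hcardC3
    _ = p ^ 5 := by ring
end
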